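/- arXiv:2410.05054 — 2 statements merged into one kernel-verified Lean document; each statement's English description precedes it below -/
import Mathlib

section
/- (Dyadic weighted estimate, equations (4.10) and (5.9) of the paper) There is a universal constant C > 0 with the following property. Let 0 ≤ α, 0 ≤ β with α + β < 1, let R ≥ 1, and let f, g : ℝ² → ℝ be measurable with M_f := sup_{r ≥ R} ( r^{-(2+2α)} ∫_{B(0,r)} |f|² )^{1/2} < ∞ and M_g := sup_{r ≥ R} ( r^{-(2+2β)} ∫_{B(0,r)} |g|² )^{1/2} < ∞. Then ∫_{|y| ≥ R} |f(y)| |g(y)| (1 + |y|²)^{-3/2} dy ≤ (C/(1 − α − β)) R^{α+β−1} M_f M_g. -/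
open MeasureTheory Metric ENNReal Set

noncomputable section

/-- The plane `ℝ²` as a Euclidean space. -/
abbrev E2 := EuclideanSpace ℝ (Fin 2)

/-- Truncated local Morrey `L²` norm
`sup_{r ≥ R} ( r^{-(d+2α)} ∫_{B(0,r)} |f|² )^{1/2}`, valued in `ℝ≥0∞`. -/
def morreyR {d : ℕ} {F : Type*} [NormedAddCommGroup F] (α R : ℝ)
    (f : EuclideanSpace ℝ (Fin d) → F) : ℝ≥0∞ :=
  ⨆ r : {r : ℝ // R ≤ r},
    ((∫⁻ x in ball (0 : EuclideanSpace ℝ (Fin d)) (r : ℝ), (‖f x‖₊ : ℝ≥0∞) ^ 2) /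
      ENNReal.ofReal ((r : ℝ) ^ ((d : ℝ) + 2 * α))) ^ ((1 : ℝ) / 2)

section DyadicHelpers

private lemma lintegral_Ioi_rpow {a : ℝ} (ha : a < -1) {c : ℝ} (hc : 0 < c) :
    ∫⁻ r in Ioi c, ENNReal.ofReal (r ^ a) = ENNReal.ofReal (-c ^ (a + 1) / (a + 1)) := by
  rw [← integral_Ioi_rpow_of_lt ha hc,
    MeasureTheory.ofReal_integral_eq_lintegral_ofReal (integrableOn_Ioi_rpow_of_lt ha hc)]
  filter_upwards [ae_restrict_mem measurableSet_Ioi] with r hr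
  exact Real.rpow_nonneg (hc.trans hr).le _

private lemma tail_weight {t : ℝ} (ht : 0 < t) :
    ∫⁻ r in Ioi t, ENNReal.ofReal (3 * r ^ (-4 : ℝ)) = ENNReal.ofReal (t ^ (-3 : ℝ)) := by
  simp_rw [ENNReal.ofReal_mul (by norm_num : (0:ℝ) ≤ 3)]
  rw [lintegral_const_mul' _ _ ofReal_ne_top, lintegral_Ioi_rpow (by norm_num) ht,
    ← ENNReal.ofReal_mul (by norm_num)]
  have h4 : (-4 : ℝ) + 1 = -3 := by norm_num
  rw [h4]
  congr 1
  ring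

private lemma morrey_ball_bound {α R : ℝ} (f : E2 → ℝ) {r : ℝ} (hr : R ≤ r) (hr0 : 0 < r) :
    (∫⁻ x in ball (0 : E2) r, (‖f x‖₊ : ℝ≥0∞) ^ 2) ^ ((1:ℝ)/2) ≤
      morreyR α R f * ENNReal.ofReal (r ^ (1 + α)) := by
  set I := ∫⁻ x in ball (0 : E2) r, (‖f x‖₊ : ℝ≥0∞) ^ 2 with hI
  set D := ENNReal.ofReal (r ^ ((2 : ℝ) + 2 * α)) with hD
  have hD0 : D ≠ 0 := (ENNReal.ofReal_pos.mpr (Real.rpow_pos_of_pos hr0 _)).ne'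
  have hDtop : D ≠ ⊤ := ofReal_ne_top
  have key : (I / D) ^ ((1:ℝ)/2) ≤ morreyR α R f := by
    rw [morreyR]
    have := le_iSup (fun s : {s : ℝ // R ≤ s} =>
      ((∫⁻ x in ball (0 : E2) (s : ℝ), (‖f x‖₊ : ℝ≥0∞) ^ 2) /
        ENNReal.ofReal ((s : ℝ) ^ (((2:ℕ) : ℝ) + 2 * α))) ^ ((1 : ℝ) / 2))
      (⟨r, hr⟩ : {s : ℝ // R ≤ s})
    simpa using this
  have hcancel : I = I / D * D := (ENNReal.div_mul_cancel hD0 hDtop).symm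
  calc I ^ ((1:ℝ)/2) = (I / D * D) ^ ((1:ℝ)/2) := by rw [← hcancel]
    _ = (I / D) ^ ((1:ℝ)/2) * D ^ ((1:ℝ)/2) :=
        ENNReal.mul_rpow_of_nonneg _ _ (by norm_num)
    _ ≤ morreyR α R f * D ^ ((1:ℝ)/2) := by
        exact mul_le_mul_left key _
    _ = morreyR α R f * ENNReal.ofReal (r ^ (1 + α)) := by
        rw [hD, ENNReal.ofReal_rpow_of_pos (Real.rpow_pos_of_pos hr0 _),
          ← Real.rpow_mul hr0.le]
        congr 2
        ring_nf

end DyadicHelpers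

/-- Dyadic weighted estimate (equations (4.10) and (5.9)):
`∫_{|y| ≥ R} |f||g| ⟨y⟩^{-3} dy ≤ (C/(1−α−β)) R^{α+β−1} M_f M_g` whenever `α+β < 1`,
with `M_f`, `M_g` the truncated Morrey norms of growth `α`, `β` at radius `R ≥ 1`. -/
theorem dyadic_weighted_estimate :
    ∃ C : ℝ, 0 < C ∧
      ∀ (α β : ℝ), 0 ≤ α → 0 ≤ β → α + β < 1 →
      ∀ R : ℝ, 1 ≤ R →
      ∀ f g : E2 → ℝ, Measurable f → Measurable g →
        morreyR α R f < ⊤ → morreyR β R g < ⊤ →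
        (∫⁻ y in {y : E2 | R ≤ ‖y‖},
            (‖f y‖₊ : ℝ≥0∞) * (‖g y‖₊ : ℝ≥0∞) *
              ENNReal.ofReal ((1 + ‖y‖ ^ 2) ^ (-(3 : ℝ) / 2))) ≤
          ENNReal.ofReal (C / (1 - α - β) * R ^ (α + β - 1)) *
            morreyR α R f * morreyR β R g := by
  refine ⟨3, by norm_num, ?_⟩
  intro α β hα hβ hαβ R hR f g hf hg hMf hMg
  have hR0 : (0:ℝ) < R := lt_of_lt_of_le one_pos hR
  set S : Set E2 := {y : E2 | R ≤ ‖y‖} with hSdef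
  have hS : MeasurableSet S :=
    (isClosed_le continuous_const continuous_norm).measurableSet
  set H : E2 → ℝ≥0∞ := fun y => (‖f y‖₊ : ℝ≥0∞) * (‖g y‖₊ : ℝ≥0∞) with hHdef
  have hH : Measurable H := hf.enorm.mul hg.enorm
  have hHtop : ∀ y, H y ≠ ⊤ := fun y => ENNReal.mul_ne_top coe_ne_top coe_ne_top
  set w : ℝ → ℝ≥0∞ := fun r => ENNReal.ofReal (3 * r ^ (-4 : ℝ)) with hwdef
  have hw : Measurable w :=
    by fun_prop
  set Mf := morreyR α R f
  set Mg := morreyR β R g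
  set F : E2 → ℝ → ℝ≥0∞ := fun y r => H y * (Ioi ‖y‖).indicator w r with hFdef
  -- Step 2+3: pointwise bound and rewriting
  have step1 : (∫⁻ y in S,
      H y * ENNReal.ofReal ((1 + ‖y‖ ^ 2) ^ (-(3 : ℝ) / 2))) ≤
      ∫⁻ y in S, ∫⁻ r in Ioi R, F y r := by
    refine lintegral_mono_ae ?_
    filter_upwards [ae_restrict_mem hS] with y hy
    have hy1 : (1:ℝ) ≤ ‖y‖ := hR.trans hy
    have hy0 : (0:ℝ) < ‖y‖ := lt_of_lt_of_le one_pos hy1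
    have hptw : ((1 + ‖y‖ ^ 2) ^ (-(3 : ℝ) / 2)) ≤ ‖y‖ ^ (-3 : ℝ) := by
      have h1 : (1 + ‖y‖ ^ 2) ^ (-(3 : ℝ) / 2) ≤ (‖y‖ ^ 2) ^ (-(3 : ℝ) / 2) :=
        Real.rpow_le_rpow_of_nonpos (by positivity) (by linarith) (by norm_num)
      calc (1 + ‖y‖ ^ 2) ^ (-(3 : ℝ) / 2) ≤ (‖y‖ ^ 2) ^ (-(3 : ℝ) / 2) := h1
        _ = ‖y‖ ^ (-3 : ℝ) := by
            rw [← Real.rpow_natCast ‖y‖ 2, ← Real.rpow_mul (norm_nonneg y)]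
            norm_num
    calc H y * ENNReal.ofReal ((1 + ‖y‖ ^ 2) ^ (-(3 : ℝ) / 2))
        ≤ H y * ENNReal.ofReal (‖y‖ ^ (-3 : ℝ)) :=
          mul_le_mul_right (ENNReal.ofReal_le_ofReal hptw) _
      _ = H y * ∫⁻ r in Ioi ‖y‖, w r := by rw [tail_weight hy0]
      _ = H y * ∫⁻ r in Ioi R, (Ioi ‖y‖).indicator w r := by
          rw [lintegral_indicator measurableSet_Ioi _,
            Measure.restrict_restrict measurableSet_Ioi,
            inter_eq_left.mpr (Ioi_subset_Ioi hy)]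
      _ = ∫⁻ r in Ioi R, F y r := by
          rw [← lintegral_const_mul' _ _ (hHtop y)]
  -- Step 4: Fubini
  have hmeas : AEMeasurable (Function.uncurry F)
      ((volume.restrict S).prod (volume.restrict (Ioi R))) := by
    have heq : Function.uncurry F = fun p : E2 × ℝ =>
        H p.1 * ({q : E2 × ℝ | ‖q.1‖ < q.2}.indicator (fun q => w q.2) p) := by
      funext p
      simp only [Function.uncurry, hFdef, Set.indicator_apply, mem_Ioi, mem_setOf_eq]
    rw [heq]
    have hset : MeasurableSet {q : E2 × ℝ | ‖q.1‖ < q.2} :=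
      (isOpen_lt (continuous_norm.comp continuous_fst) continuous_snd).measurableSet
    exact ((hH.comp measurable_fst).mul
      ((hw.comp measurable_snd).indicator hset)).aemeasurable
  have swap : ∫⁻ y in S, ∫⁻ r in Ioi R, F y r =
      ∫⁻ r in Ioi R, ∫⁻ y in S, F y r :=
    lintegral_lintegral_swap hmeas
  -- Step 5+6+7: bound the inner integral for r > R
  have step5 : ∀ r : ℝ, r ∈ Ioi R →
      (∫⁻ y in S, F y r) ≤
        (Mf * Mg) * ENNReal.ofReal (3 * r ^ (α + β - 2)) := by
    intro r hr
    have hrR : R ≤ r := (le_of_lt hr)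
    have hr0 : (0:ℝ) < r := hR0.trans hr
    have hind : ∀ y : E2, F y r =
        (ball (0:E2) r).indicator (fun y => w r * H y) y := by
      intro y
      simp only [hFdef, Set.indicator_apply, mem_Ioi, mem_ball_zero_iff]
      by_cases h : ‖y‖ < r <;> simp [h, mul_comm]
    calc (∫⁻ y in S, F y r)
        = ∫⁻ y in S, (ball (0:E2) r).indicator (fun y => w r * H y) y := by
          simp_rw [hind]
      _ = ∫⁻ y in ball (0:E2) r ∩ S, w r * H y := by
          rw [lintegral_indicator measurableSet_ball _,
            Measure.restrict_restrict measurableSet_ball]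
      _ ≤ ∫⁻ y in ball (0:E2) r, w r * H y :=
          lintegral_mono' (Measure.restrict_mono inter_subset_left le_rfl) le_rfl
      _ = w r * ∫⁻ y in ball (0:E2) r, H y := lintegral_const_mul' _ _ ofReal_ne_top
      _ ≤ w r * ((∫⁻ y in ball (0:E2) r, (‖f y‖₊ : ℝ≥0∞) ^ 2) ^ ((1:ℝ)/2) *
            (∫⁻ y in ball (0:E2) r, (‖g y‖₊ : ℝ≥0∞) ^ 2) ^ ((1:ℝ)/2)) := by
          refine mul_le_mul_right ?_ _
          have hconj : Real.HolderConjugate 2 2 := Real.HolderConjugate.two_two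
          have := ENNReal.lintegral_mul_le_Lp_mul_Lq (volume.restrict (ball (0:E2) r))
            hconj hf.enorm.aemeasurable hg.enorm.aemeasurable
          simp only [Pi.mul_apply] at this
          calc ∫⁻ y in ball (0:E2) r, H y
              ≤ (∫⁻ y in ball (0:E2) r, (‖f y‖₊ : ℝ≥0∞) ^ (2:ℝ)) ^ ((1:ℝ)/2) *
                (∫⁻ y in ball (0:E2) r, (‖g y‖₊ : ℝ≥0∞) ^ (2:ℝ)) ^ ((1:ℝ)/2) := this
            _ = _ := by
                simp_rw [show ((2:ℝ)) = ((2:ℕ):ℝ) by norm_num, ENNReal.rpow_natCast]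
      _ ≤ w r * ((Mf * ENNReal.ofReal (r ^ (1 + α))) *
            (Mg * ENNReal.ofReal (r ^ (1 + β)))) := by
          exact mul_le_mul_right
            (mul_le_mul' (morrey_ball_bound f hrR hr0) (morrey_ball_bound g hrR hr0)) _
      _ = (Mf * Mg) * ENNReal.ofReal (3 * r ^ (α + β - 2)) := by
          have hofr : ENNReal.ofReal (3 * r ^ (-4 : ℝ)) *
              (ENNReal.ofReal (r ^ (1 + α)) * ENNReal.ofReal (r ^ (1 + β))) =
              ENNReal.ofReal (3 * r ^ (α + β - 2)) := by
            rw [← ENNReal.ofReal_mul (Real.rpow_nonneg hr0.le _),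
              ← ENNReal.ofReal_mul (by positivity)]
            congr 1
            rw [← Real.rpow_add hr0, mul_assoc, ← Real.rpow_add hr0]
            congr 2
            ring
          calc w r * (Mf * ENNReal.ofReal (r ^ (1 + α)) *
                (Mg * ENNReal.ofReal (r ^ (1 + β))))
              = (Mf * Mg) * (w r * (ENNReal.ofReal (r ^ (1 + α)) *
                  ENNReal.ofReal (r ^ (1 + β)))) := by ring
            _ = (Mf * Mg) * ENNReal.ofReal (3 * r ^ (α + β - 2)) := by
                rw [hwdef]; rw [hofr]
  -- Step 8: final computation
  have hlast : ∫⁻ r in Ioi R, (Mf * Mg) * ENNReal.ofReal (3 * r ^ (α + β - 2)) =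
      (Mf * Mg) * ENNReal.ofReal (3 * (-R ^ (α + β - 1) / (α + β - 1))) := by
    rw [lintegral_const_mul' _ _ (ENNReal.mul_ne_top hMf.ne hMg.ne)]
    congr 1
    simp_rw [ENNReal.ofReal_mul (by norm_num : (0:ℝ) ≤ 3)]
    rw [lintegral_const_mul' _ _ ofReal_ne_top,
      lintegral_Ioi_rpow (by linarith) hR0]
    have : α + β - 2 + 1 = α + β - 1 := by ring
    rw [this, ← ENNReal.ofReal_mul (by norm_num : (0:ℝ) ≤ 3)]
  calc (∫⁻ y in S, H y * ENNReal.ofReal ((1 + ‖y‖ ^ 2) ^ (-(3 : ℝ) / 2)))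
      ≤ ∫⁻ y in S, ∫⁻ r in Ioi R, F y r := step1
    _ = ∫⁻ r in Ioi R, ∫⁻ y in S, F y r := swap
    _ ≤ ∫⁻ r in Ioi R, (Mf * Mg) * ENNReal.ofReal (3 * r ^ (α + β - 2)) := by
        refine lintegral_mono_ae ?_
        filter_upwards [ae_restrict_mem measurableSet_Ioi] with r hr
        exact step5 r hr
    _ = (Mf * Mg) * ENNReal.ofReal (3 * (-R ^ (α + β - 1) / (α + β - 1))) := hlast
    _ = ENNReal.ofReal (3 / (1 - α - β) * R ^ (α + β - 1)) * Mf * Mg := by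
        have : 3 * (-R ^ (α + β - 1) / (α + β - 1)) =
            3 / (1 - α - β) * R ^ (α + β - 1) := by
          rw [show (1:ℝ) - α - β = -(α + β - 1) by ring]
          rw [div_neg, neg_div]
          ring
        rw [this]
        ring


end
end

section
/- (Weighted square-integral estimate, from the proof of Proposition 6.6) Let d ≥ 1 and 0 ≤ α < 1/2. There is a constant C > 0, depending only on d and α, such that for every λ ≥ 1 and every measurable f : ℝ^d → ℝ with M := sup_{r ≥ 1} ( r^{-(d+2α)} ∫_{B(0,r)} |f|² )^{1/2} < ∞, one has ∫_{ℝ^d} |f(y)|² (1 + |y|²/λ²)^{-(d+1)/2} dy ≤ C λ^{d+2α} M². -/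
open MeasureTheory Metric ENNReal

noncomputable section

set_option maxHeartbeats 1000000 in
/-- Weighted square-integral estimate (from the proof of Proposition 6.6):
`∫ |f(y)|² (1 + |y|²/λ²)^{-(d+1)/2} dy ≤ C λ^{d+2α} M²` for `λ ≥ 1`,
where `M = ‖f‖_{L²_α}` and `C` depends only on `d` and `α < 1/2`. -/
theorem weighted_square_estimate (d : ℕ) (hd : 1 ≤ d) (α : ℝ) (hα0 : 0 ≤ α)
    (hα : α < 1 / 2) :
    ∃ C : ℝ, 0 < C ∧
      ∀ lam : ℝ, 1 ≤ lam →
      ∀ f : EuclideanSpace ℝ (Fin d) → ℝ, Measurable f →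
        morreyR α 1 f < ⊤ →
        (∫⁻ y, (‖f y‖₊ : ℝ≥0∞) ^ 2 *
            ENNReal.ofReal ((1 + ‖y‖ ^ 2 / lam ^ 2) ^ (-((d : ℝ) + 1) / 2))) ≤
          ENNReal.ofReal (C * lam ^ ((d : ℝ) + 2 * α)) * (morreyR α 1 f) ^ 2 := by
  set p : ℝ := (d : ℝ) + 2 * α with hpdef
  have hp0 : 0 < p := by
    have : (1:ℝ) ≤ (d:ℝ) := by exact_mod_cast hd
    unfold p; linarith
  have hp1 : p ≤ (d : ℝ) + 1 := by unfold p; linarith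
  set q : ℝ := (2 : ℝ) ^ (2 * α - 1) with hqdef
  have hq0 : 0 < q := Real.rpow_pos_of_pos two_pos _
  have hq1 : q < 1 := by
    unfold q
    exact Real.rpow_lt_one_of_one_lt_of_neg one_lt_two (by linarith)
  have h1q : 0 < 1 - q := by linarith
  refine ⟨1 + 2 ^ (d + 1) / (1 - q), by positivity, ?_⟩
  intro lam hlam f hf hM
  have hlam0 : 0 < lam := by linarith
  set M := morreyR α 1 f with hMdef
  -- Key estimate from the Morrey norm
  have key : ∀ r : ℝ, 1 ≤ r →
      (∫⁻ x in ball (0 : EuclideanSpace ℝ (Fin d)) r, (‖f x‖₊ : ℝ≥0∞) ^ 2) ≤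
        M ^ 2 * ENNReal.ofReal (r ^ p) := by
    intro r hr
    have hrp : 0 < r ^ p := Real.rpow_pos_of_pos (by linarith) _
    set I := ∫⁻ x in ball (0 : EuclideanSpace ℝ (Fin d)) r, (‖f x‖₊ : ℝ≥0∞) ^ 2 with hI
    have h1 : (I / ENNReal.ofReal (r ^ p)) ^ ((1 : ℝ) / 2) ≤ M := by
      rw [hMdef, morreyR]
      exact le_iSup (fun s : {r : ℝ // (1:ℝ) ≤ r} =>
        ((∫⁻ x in ball (0 : EuclideanSpace ℝ (Fin d)) (s : ℝ), (‖f x‖₊ : ℝ≥0∞) ^ 2) /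
          ENNReal.ofReal ((s : ℝ) ^ ((d : ℝ) + 2 * α))) ^ ((1 : ℝ) / 2)) ⟨r, hr⟩
    have h2 := ENNReal.rpow_le_rpow h1 (by norm_num : (0:ℝ) ≤ 2)
    rw [← ENNReal.rpow_mul] at h2
    norm_num at h2
    rw [ENNReal.div_le_iff (ENNReal.ofReal_pos.mpr hrp).ne' ENNReal.ofReal_ne_top] at h2
    exact h2
  -- Covering sets
  set Cs : ℕ → Set (EuclideanSpace ℝ (Fin d)) := fun k =>
    Nat.rec (ball (0 : EuclideanSpace ℝ (Fin d)) lam)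
      (fun k _ => ball (0 : EuclideanSpace ℝ (Fin d)) (2 ^ (k + 1) * lam) \ ball (0 : EuclideanSpace ℝ (Fin d)) (2 ^ k * lam)) k
    with hCs
  have hCs0 : Cs 0 = ball (0 : EuclideanSpace ℝ (Fin d)) lam := rfl
  have hCsS : ∀ k, Cs (k + 1) = ball (0 : EuclideanSpace ℝ (Fin d)) (2 ^ (k + 1) * lam) \ ball (0 : EuclideanSpace ℝ (Fin d)) (2 ^ k * lam) :=
    fun k => rfl
  have hcover : (Set.univ : Set (EuclideanSpace ℝ (Fin d))) ⊆ ⋃ k, Cs k := by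
    intro y _
    have hex : ∃ n, ‖y‖ < 2 ^ n * lam := by
      obtain ⟨n, hn⟩ := pow_unbounded_of_one_lt ‖y‖ (one_lt_two (α := ℝ))
      exact ⟨n, hn.trans_le (le_mul_of_one_le_right (by positivity) hlam)⟩
    classical
    have hny := Nat.find_spec hex
    rcases hfe : Nat.find hex with - | m
    · rw [hfe] at hny
      exact Set.mem_iUnion.mpr ⟨0, by simpa [hCs0, mem_ball_zero_iff] using hny⟩
    · rw [hfe] at hny
      have hmin := Nat.find_min hex (by rw [hfe]; exact Nat.lt_succ_self m)
      refine Set.mem_iUnion.mpr ⟨m + 1, ?_⟩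
      rw [hCsS]
      exact ⟨by simpa [mem_ball_zero_iff] using hny,
        by simpa [mem_ball_zero_iff] using hmin⟩
  set g : EuclideanSpace ℝ (Fin d) → ℝ≥0∞ := fun y => (‖f y‖₊ : ℝ≥0∞) ^ 2 *
      ENNReal.ofReal ((1 + ‖y‖ ^ 2 / lam ^ 2) ^ (-((d : ℝ) + 1) / 2)) with hg
  set X : ℝ≥0∞ := M ^ 2 * ENNReal.ofReal (lam ^ p) with hX
  -- bound each piece
  have hbound0 : (∫⁻ y in Cs 0, g y) ≤ X := by
    have hle : ∀ y ∈ Cs 0, g y ≤ (‖f y‖₊ : ℝ≥0∞) ^ 2 := by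
      intro y _
      rw [hg]
      calc (‖f y‖₊ : ℝ≥0∞) ^ 2 * ENNReal.ofReal ((1 + ‖y‖ ^ 2 / lam ^ 2) ^ (-((d : ℝ) + 1) / 2))
          ≤ (‖f y‖₊ : ℝ≥0∞) ^ 2 * 1 := by
            gcongr
            rw [← ENNReal.ofReal_one]
            apply ENNReal.ofReal_le_ofReal
            apply Real.rpow_le_one_of_one_le_of_nonpos
            · have : 0 ≤ ‖y‖ ^ 2 / lam ^ 2 := by positivity
              linarith
            · have : (1:ℝ) ≤ (d:ℝ) := by exact_mod_cast hd
              nlinarith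
        _ = (‖f y‖₊ : ℝ≥0∞) ^ 2 := mul_one _
    calc (∫⁻ y in Cs 0, g y) ≤ ∫⁻ y in Cs 0, (‖f y‖₊ : ℝ≥0∞) ^ 2 :=
          setLIntegral_mono' measurableSet_ball hle
      _ ≤ M ^ 2 * ENNReal.ofReal (lam ^ p) := by rw [hCs0]; exact key lam hlam
  have hboundS : ∀ k : ℕ, (∫⁻ y in Cs (k + 1), g y) ≤
      ENNReal.ofReal (q ^ k * 2 ^ (d + 1)) * X := by
    intro k
    set rk : ℝ := ((4 : ℝ) ^ k) ^ (-((d : ℝ) + 1) / 2) with hrk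
    have hrk0 : 0 ≤ rk := Real.rpow_nonneg (by positivity) _
    have hle : ∀ y ∈ Cs (k + 1), g y ≤ ENNReal.ofReal rk * (‖f y‖₊ : ℝ≥0∞) ^ 2 := by
      intro y hy
      rw [hCsS] at hy
      have hy2 : 2 ^ k * lam ≤ ‖y‖ := by
        have := hy.2
        simpa [mem_ball_zero_iff, not_lt] using this
      have hbase : (4 : ℝ) ^ k ≤ 1 + ‖y‖ ^ 2 / lam ^ 2 := by
        have h4k : ((2:ℝ) ^ k) ^ 2 = 4 ^ k := by
          rw [← pow_mul, mul_comm, pow_mul]; norm_num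
        have hsq := mul_le_mul hy2 hy2 (by positivity) (norm_nonneg y)
        have h4 : (4 : ℝ) ^ k * lam ^ 2 ≤ ‖y‖ ^ 2 := by nlinarith
        have : (4 : ℝ) ^ k ≤ ‖y‖ ^ 2 / lam ^ 2 := by
          rw [le_div_iff₀ (by positivity)]; linarith
        linarith
      have hexp : -((d : ℝ) + 1) / 2 ≤ 0 := by
        have : (0:ℝ) ≤ (d:ℝ) := Nat.cast_nonneg d
        linarith
      have hw : (1 + ‖y‖ ^ 2 / lam ^ 2) ^ (-((d : ℝ) + 1) / 2) ≤ rk :=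
        Real.rpow_le_rpow_of_nonpos (by positivity) hbase hexp
      rw [hg, mul_comm (ENNReal.ofReal rk)]
      exact mul_le_mul_right (ENNReal.ofReal_le_ofReal hw) _
    calc (∫⁻ y in Cs (k + 1), g y)
        ≤ ∫⁻ y in Cs (k + 1), ENNReal.ofReal rk * (‖f y‖₊ : ℝ≥0∞) ^ 2 :=
          setLIntegral_mono' ((measurableSet_ball).diff measurableSet_ball) hle
      _ = ENNReal.ofReal rk * ∫⁻ y in Cs (k + 1), (‖f y‖₊ : ℝ≥0∞) ^ 2 :=
          lintegral_const_mul' _ _ ENNReal.ofReal_ne_top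
      _ ≤ ENNReal.ofReal rk * ∫⁻ y in ball (0 : EuclideanSpace ℝ (Fin d)) (2 ^ (k + 1) * lam), (‖f y‖₊ : ℝ≥0∞) ^ 2 := by
          gcongr
          exact (show Cs (k + 1) ⊆ ball (0 : EuclideanSpace ℝ (Fin d)) (2 ^ (k + 1) * lam) by rw [hCsS]; exact Set.diff_subset)
      _ ≤ ENNReal.ofReal rk * (M ^ 2 * ENNReal.ofReal ((2 ^ (k + 1) * lam) ^ p)) := by
          gcongr
          have h2k : (1:ℝ) ≤ 2 ^ (k + 1) := one_le_pow₀ one_le_two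
          exact key _ (by nlinarith)
      _ ≤ ENNReal.ofReal (q ^ k * 2 ^ (d + 1)) * X := by
          have hreal : rk * ((2:ℝ) ^ (k + 1) * lam) ^ p ≤ q ^ k * 2 ^ (d + 1) * lam ^ p := by
            have e1 : rk = (2:ℝ) ^ ((2 * k : ℝ) * (-((d : ℝ) + 1) / 2)) := by
              rw [hrk]
              rw [show ((4:ℝ) ^ k) = (2:ℝ) ^ ((2 * k : ℕ) : ℝ) by
                rw [Real.rpow_natCast]; rw [pow_mul]; norm_num]
              rw [← Real.rpow_mul (by norm_num)]
              push_cast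
              ring_nf
            have e2 : ((2:ℝ) ^ (k + 1) * lam) ^ p = (2:ℝ) ^ (((k:ℝ) + 1) * p) * lam ^ p := by
              rw [Real.mul_rpow (by positivity) (by positivity)]
              congr 1
              rw [show ((2:ℝ) ^ (k + 1)) = (2:ℝ) ^ (((k + 1 : ℕ)) : ℝ) by rw [Real.rpow_natCast]]
              rw [← Real.rpow_mul (by norm_num)]
              push_cast
              ring_nf
            have e3 : q ^ k = (2:ℝ) ^ ((2 * α - 1) * k) := by
              rw [hqdef, ← Real.rpow_natCast ((2:ℝ) ^ (2 * α - 1)) k,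
                ← Real.rpow_mul (by norm_num)]
            have e4 : ((2:ℝ) ^ (d + 1) : ℝ) = (2:ℝ) ^ (((d:ℝ) + 1)) := by
              rw [show ((2:ℝ) ^ (d + 1)) = (2:ℝ) ^ (((d + 1 : ℕ)) : ℝ) by rw [Real.rpow_natCast]]
              push_cast; ring_nf
            rw [e1, e2, e3, e4, ← mul_assoc, ← Real.rpow_add two_pos, ← Real.rpow_add two_pos]
            have hexple : 2 * (k:ℝ) * (-((d:ℝ) + 1) / 2) + ((k:ℝ) + 1) * p ≤
                (2 * α - 1) * (k:ℝ) + ((d:ℝ) + 1) := by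
              have hk0 : (0:ℝ) ≤ (k:ℝ) := Nat.cast_nonneg k
              unfold p
              nlinarith
            exact mul_le_mul_of_nonneg_right
              (Real.rpow_le_rpow_of_exponent_le one_le_two hexple)
              (Real.rpow_nonneg hlam0.le p)
          calc ENNReal.ofReal rk * (M ^ 2 * ENNReal.ofReal ((2 ^ (k + 1) * lam) ^ p))
              = M ^ 2 * ENNReal.ofReal (rk * ((2:ℝ) ^ (k + 1) * lam) ^ p) := by
                rw [ENNReal.ofReal_mul hrk0]; ring
            _ ≤ M ^ 2 * ENNReal.ofReal (q ^ k * 2 ^ (d + 1) * lam ^ p) :=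
                mul_le_mul_right (ENNReal.ofReal_le_ofReal hreal) _
            _ = ENNReal.ofReal (q ^ k * 2 ^ (d + 1)) * X := by
                rw [hX, ENNReal.ofReal_mul (by positivity)]; ring
  -- assemble
  have hC0 : (0:ℝ) ≤ 1 + 2 ^ (d + 1) / (1 - q) := by positivity
  have hgeom : (∑' m : ℕ, (ENNReal.ofReal q) ^ m) = ENNReal.ofReal ((1 - q)⁻¹) := by
    rw [ENNReal.tsum_geometric, ENNReal.ofReal_inv_of_pos h1q, ENNReal.ofReal_sub _ hq0.le,
      ENNReal.ofReal_one]
  set b : ℕ → ℝ≥0∞ := fun k =>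
    Nat.rec X (fun m _ => ENNReal.ofReal (q ^ m * 2 ^ (d + 1)) * X) k with hb
  have hb0 : b 0 = X := rfl
  have hbS : ∀ m : ℕ, b (m + 1) = ENNReal.ofReal (q ^ m * 2 ^ (d + 1)) * X := fun m => rfl
  have hsum : (∑' k, b k) = X + ∑' m : ℕ, ENNReal.ofReal (q ^ m * 2 ^ (d + 1)) * X := by
    rw [tsum_eq_zero_add' ENNReal.summable, hb0]
  calc (∫⁻ y, g y) = ∫⁻ y in Set.univ, g y := (setLIntegral_univ g).symm
    _ ≤ ∫⁻ y in ⋃ k, Cs k, g y := lintegral_mono_set hcover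
    _ ≤ ∑' k, ∫⁻ y in Cs k, g y := lintegral_iUnion_le _ _
    _ ≤ ∑' k, b k := by
        apply ENNReal.tsum_le_tsum
        intro k
        rcases k with - | m
        · exact hb0 ▸ hbound0
        · exact (hbS m) ▸ hboundS m
    _ = X + ∑' m : ℕ, ENNReal.ofReal (q ^ m * 2 ^ (d + 1)) * X := hsum
    _ = X + ENNReal.ofReal ((1 - q)⁻¹) * (ENNReal.ofReal (2 ^ (d + 1)) * X) := by
        congr 1
        calc (∑' m : ℕ, ENNReal.ofReal (q ^ m * 2 ^ (d + 1)) * X)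
            = ∑' m : ℕ, (ENNReal.ofReal q) ^ m * (ENNReal.ofReal (2 ^ (d + 1)) * X) := by
              congr 1
              funext m
              rw [ENNReal.ofReal_mul (by positivity), ENNReal.ofReal_pow hq0.le, mul_assoc]
          _ = (∑' m : ℕ, (ENNReal.ofReal q) ^ m) * (ENNReal.ofReal (2 ^ (d + 1)) * X) :=
              ENNReal.tsum_mul_right
          _ = ENNReal.ofReal ((1 - q)⁻¹) * (ENNReal.ofReal (2 ^ (d + 1)) * X) := by
              rw [hgeom]
    _ = ENNReal.ofReal (1 + 2 ^ (d + 1) / (1 - q)) * X := by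
        rw [← mul_assoc, ← ENNReal.ofReal_mul (by positivity),
          ENNReal.ofReal_add one_pos.le (by positivity), ENNReal.ofReal_one]
        rw [add_mul, one_mul]
        congr 2
        rw [div_eq_mul_inv, mul_comm]
    _ = ENNReal.ofReal ((1 + 2 ^ (d + 1) / (1 - q)) * lam ^ p) * M ^ 2 := by
        rw [ENNReal.ofReal_mul hC0, hX]
        ring
end
end
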